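/- Let G be a graph that is not a complete graph. Then the treedepth of G equals the minimum over all minimal separators S of G of |S| plus the maximum treedepth of G[C] over connected components C of G - S. -/

import Mathlib

namespace PACE

open SimpleGraph

variable {V : Type*}

/-- Reachability within the induced subgraph `G[A]`. -/
def ReachIn (G : SimpleGraph V) (A : Set V) (a b : V) : Prop :=
  ∃ (ha : a ∈ A) (hb : b ∈ A), (G.induce A).Reachable ⟨a, ha⟩ ⟨b, hb⟩

/-- `S` is an `a,b`-separator of the induced subgraph `G[Y]`. -/
def IsSepIn (G : SimpleGraph V) (Y S : Set V) (a b : V) : Prop :=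
  S ⊆ Y ∧ a ∈ Y \ S ∧ b ∈ Y \ S ∧ ¬ ReachIn G (Y \ S) a b

/-- `S` is a minimal `a,b`-separator of `G[Y]`. -/
def IsMinSepIn (G : SimpleGraph V) (Y S : Set V) (a b : V) : Prop :=
  IsSepIn G Y S a b ∧ ∀ S' ⊂ S, ¬ IsSepIn G Y S' a b

/-- `S` is a minimal separator of `G`. -/
def IsMinSep (G : SimpleGraph V) (S : Set V) : Prop :=
  ∃ a b, IsMinSepIn G Set.univ S a b

/-- `C` is (the vertex set of) a connected component of `G[A]`. -/
def IsCompOf (G : SimpleGraph V) (A C : Set V) : Prop :=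
  C ⊆ A ∧ C.Nonempty ∧ (G.induce C).Connected ∧
    ∀ u ∈ C, ∀ v ∈ A \ C, ¬ G.Adj u v

/-- The open neighborhood of a vertex set. -/
def nbhdSet (G : SimpleGraph V) (C : Set V) : Set V :=
  {v | v ∉ C ∧ ∃ u ∈ C, G.Adj u v}

/-- A treedepth decomposition (elimination forest) of `G`, given by its
ancestor relation: a partial order in which the set of ancestors of any vertex
is a chain, and every edge of `G` joins an ancestor-descendant pair. -/
structure TDForest (G : SimpleGraph V) where
  anc : V → V → Prop
  refl : ∀ v, anc v v
  antisymm : ∀ u v, anc u v → anc v u → u = v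
  trans : ∀ u v w, anc u v → anc v w → anc u w
  ancChain : ∀ u w v, anc u v → anc w v → anc u w ∨ anc w u
  adjComparable : ∀ u v, G.Adj u v → anc u v ∨ anc v u

/-- Depth of an elimination forest: the maximum number of vertices on a
root-to-vertex path. -/
noncomputable def TDForest.depth {G : SimpleGraph V} (F : TDForest G) : ℕ :=
  ⨆ v, Set.ncard {u | F.anc u v}

/-- Treedepth: the minimum depth of an elimination forest. -/
noncomputable def treedepth (G : SimpleGraph V) : ℕ :=
  sInf {k | ∃ F : TDForest G, F.depth ≤ k}


section Basic

variable {W W' : Type*}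

/-- The chain forest given by a well-ordering. -/
noncomputable def chainForest (H : SimpleGraph W) : TDForest H where
  anc u v := WellOrderingRel u v ∨ u = v
  refl v := Or.inr rfl
  antisymm u v huv hvu := by
    rcases huv with h | h
    · rcases hvu with h' | h'
      · exact absurd (_root_.trans h h') (irrefl_of WellOrderingRel u)
      · exact h'.symm
    · exact h
  trans u v w huv hvw := by
    rcases huv with h | rfl
    · rcases hvw with h' | rfl
      · exact Or.inl (_root_.trans h h')
      · exact Or.inl h
    · exact hvw
  ancChain u w v _ _ := by
    rcases trichotomous_of WellOrderingRel u w with h | h | h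
    · exact Or.inl (Or.inl h)
    · exact Or.inl (Or.inr h)
    · exact Or.inr (Or.inl h)
  adjComparable u v _ := by
    rcases trichotomous_of WellOrderingRel u v with h | h | h
    · exact Or.inl (Or.inl h)
    · exact Or.inl (Or.inr h)
    · exact Or.inr (Or.inl h)

instance (H : SimpleGraph W) : Nonempty (TDForest H) := ⟨chainForest H⟩

lemma TDForest.depth_le {H : SimpleGraph W} (F : TDForest H) {k : ℕ}
    (h : ∀ v, Set.ncard {u | F.anc u v} ≤ k) : F.depth ≤ k :=
  csSup_le' (by rintro n ⟨v, rfl⟩; exact h v)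

lemma TDForest.ncard_anc_le [Finite W] {H : SimpleGraph W} (F : TDForest H) (v : W) :
    Set.ncard {u | F.anc u v} ≤ F.depth :=
  le_csSup (Set.Finite.bddAbove (Set.finite_range _)) ⟨v, rfl⟩

lemma treedepth_le_depth {H : SimpleGraph W} (F : TDForest H) : treedepth H ≤ F.depth :=
  Nat.sInf_le ⟨F, le_rfl⟩

lemma exists_forest_depth_le (H : SimpleGraph W) :
    ∃ F : TDForest H, F.depth ≤ treedepth H := by
  have hne : {k | ∃ F : TDForest H, F.depth ≤ k}.Nonempty :=
    ⟨(chainForest H).depth, chainForest H, le_rfl⟩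
  exact Nat.sInf_mem hne

lemma treedepth_le_card [Finite W] (H : SimpleGraph W) :
    treedepth H ≤ Nat.card W := by
  refine le_trans (treedepth_le_depth (chainForest H)) ((chainForest H).depth_le fun v => ?_)
  calc Set.ncard {u | (chainForest H).anc u v} ≤ (Set.univ : Set W).ncard :=
        Set.ncard_le_ncard (Set.subset_univ _) Set.finite_univ
    _ = Nat.card W := Set.ncard_univ W

/-- Pulling back a forest along an injective graph map. -/
lemma treedepth_le_of_map [Finite W'] {H : SimpleGraph W} {H' : SimpleGraph W'}
    (φ : W → W') (hinj : Function.Injective φ)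
    (hadj : ∀ a b, H.Adj a b → H'.Adj (φ a) (φ b)) :
    treedepth H ≤ treedepth H' := by
  obtain ⟨F', hF'⟩ := exists_forest_depth_le H'
  refine le_trans (treedepth_le_depth ⟨fun u v => F'.anc (φ u) (φ v), fun v => F'.refl _,
    fun u v h h' => hinj (F'.antisymm _ _ h h'),
    fun u v w h h' => F'.trans _ _ _ h h',
    fun u w v h h' => F'.ancChain _ _ _ h h',
    fun u v h => F'.adjComparable _ _ (hadj _ _ h)⟩) ?_
  refine le_trans (TDForest.depth_le _ fun v => ?_) hF'
  calc Set.ncard {u | F'.anc (φ u) (φ v)}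
      ≤ Set.ncard {u | F'.anc u (φ v)} :=
        Set.ncard_le_ncard_of_injOn φ (fun a ha => ha) (hinj.injOn) (Set.toFinite _)
    _ ≤ F'.depth := F'.ncard_anc_le _

end Basic

section Reach

variable {G : SimpleGraph V} {A B C : Set V} {a b c v : V}

lemma reachIn_of_walk (w : G.Walk a b) (hw : ∀ x ∈ w.support, x ∈ A) :
    ReachIn G A a b := by
  induction w with
  | nil =>
    exact ⟨hw _ (by simp), hw _ (by simp), Reachable.refl _⟩
  | @cons u c b h p ih =>
    have hu : u ∈ A := hw _ (by simp)
    have hsup : ∀ x ∈ p.support, x ∈ A := fun x hx => hw _ (by simp [hx])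
    obtain ⟨hc, hb, hr⟩ := ih hsup
    exact ⟨hu, hb, Reachable.trans (Adj.reachable (by exact h : (G.induce A).Adj ⟨u, hu⟩ ⟨c, hc⟩)) hr⟩

lemma ReachIn.exists_walk (h : ReachIn G A a b) :
    ∃ w : G.Walk a b, ∀ x ∈ w.support, x ∈ A := by
  obtain ⟨ha, hb, hr⟩ := h
  obtain ⟨w⟩ := hr
  refine ⟨w.map ⟨Subtype.val, fun hadj => hadj⟩, ?_⟩
  intro x hx
  rw [Walk.support_map, List.mem_map] at hx
  obtain ⟨z, _, rfl⟩ := hx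
  exact z.2

lemma ReachIn.refl (ha : a ∈ A) : ReachIn G A a a := ⟨ha, ha, Reachable.refl _⟩

lemma ReachIn.symm (h : ReachIn G A a b) : ReachIn G A b a := by
  obtain ⟨ha, hb, hr⟩ := h; exact ⟨hb, ha, hr.symm⟩

lemma ReachIn.trans (h : ReachIn G A a b) (h' : ReachIn G A b c) : ReachIn G A a c := by
  obtain ⟨ha, hb, hr⟩ := h; obtain ⟨hb', hc, hr'⟩ := h'
  exact ⟨ha, hc, hr.trans hr'⟩

lemma ReachIn.mono (hAB : A ⊆ B) (h : ReachIn G A a b) : ReachIn G B a b := by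
  obtain ⟨w, hw⟩ := h.exists_walk
  exact reachIn_of_walk w fun x hx => hAB (hw x hx)

lemma ReachIn.mem_left (h : ReachIn G A a b) : a ∈ A := h.1
lemma ReachIn.mem_right (h : ReachIn G A a b) : b ∈ A := h.2.1

lemma ReachIn.of_adj (ha : a ∈ A) (hb : b ∈ A) (h : G.Adj a b) : ReachIn G A a b :=
  ⟨ha, hb, Adj.reachable (by exact h : (G.induce A).Adj ⟨a, ha⟩ ⟨b, hb⟩)⟩

/-- The component (reachability class) of `v` in `G[A]`. -/
def Cset (G : SimpleGraph V) (A : Set V) (v : V) : Set V := {u | ReachIn G A v u}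

lemma mem_Cset_self (hv : v ∈ A) : v ∈ Cset G A v := ReachIn.refl hv

lemma Cset_subset : Cset G A v ⊆ A := fun _ h => h.mem_right

lemma Cset_eq_of_mem (hu : a ∈ Cset G A v) : Cset G A a = Cset G A v := by
  ext x
  exact ⟨fun h => (hu : ReachIn G A v a).trans h, fun h => (hu : ReachIn G A v a).symm.trans h⟩

lemma reachIn_mem_of_walk (w : G.Walk a b) (hw : ∀ x ∈ w.support, x ∈ A) :
    ∀ z ∈ w.support, ReachIn G A a z := by
  induction w with
  | nil =>
    intro z hz; simp at hz; subst hz; exact ReachIn.refl (hw _ (by simp))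
  | @cons u c b h p ih =>
    intro z hz
    have hu : u ∈ A := hw _ (by simp)
    have hc : c ∈ A := hw _ (by simp)
    have hsup : ∀ x ∈ p.support, x ∈ A := fun x hx => hw _ (by simp [hx])
    rw [Walk.support_cons, List.mem_cons] at hz
    rcases hz with rfl | hz
    · exact ReachIn.refl hu
    · exact (ReachIn.of_adj hu hc h).trans (ih hsup z hz)

lemma Cset_isCompOf (hv : v ∈ A) : IsCompOf G A (Cset G A v) := by
  have key : ∀ x, x ∈ Cset G A v → ReachIn G (Cset G A v) v x := by
    intro x hx
    obtain ⟨w, hw⟩ := (hx : ReachIn G A v x).exists_walk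
    exact reachIn_of_walk w fun z hz => reachIn_mem_of_walk w hw z hz
  refine ⟨Cset_subset, ⟨v, mem_Cset_self hv⟩, ?_, ?_⟩
  · rw [SimpleGraph.connected_iff]
    refine ⟨?_, ⟨⟨v, mem_Cset_self hv⟩⟩⟩
    rintro ⟨x, hx⟩ ⟨y, hy⟩
    obtain ⟨h1, h2, hr⟩ := (key x hx).symm.trans (key y hy)
    exact hr
  · rintro u hu y ⟨hyA, hyC⟩ hadj
    exact hyC ((hu : ReachIn G A v u).trans (ReachIn.of_adj hu.mem_right hyA hadj))

lemma IsCompOf.reachIn_closed (hC : IsCompOf G A C) (hx : a ∈ C) (h : ReachIn G A a b) :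
    b ∈ C := by
  obtain ⟨w, hw⟩ := h.exists_walk
  clear h
  induction w with
  | nil => exact hx
  | @cons u c b h p ih =>
    have hcA : c ∈ A := hw _ (by simp)
    have hcC : c ∈ C := by
      by_contra hcC
      exact hC.2.2.2 u hx c ⟨hcA, hcC⟩ h
    exact ih hcC (fun x hxp => hw _ (by simp [hxp]))

lemma IsCompOf.eq_Cset (hC : IsCompOf G A C) (hv : v ∈ C) : C = Cset G A v := by
  apply Set.Subset.antisymm
  · intro x hx
    have : ReachIn G C v x := by
      exact ⟨hv, hx, hC.2.2.1.preconnected ⟨v, hv⟩ ⟨x, hx⟩⟩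
    exact this.mono hC.1
  · intro x hx
    exact hC.reachIn_closed hv hx

end Reach

section Forest2

variable {W : Type*} {H : SimpleGraph W}

lemma TDForest.exists_common_anc (F : TDForest H) {a b : W} (w : H.Walk a b) :
    ∃ m, F.anc m a ∧ F.anc m b := by
  induction w with
  | nil => exact ⟨_, F.refl _, F.refl _⟩
  | @cons u c b h p ih =>
    obtain ⟨m, hmc, hmb⟩ := ih
    rcases F.adjComparable u c h with h' | h'
    · rcases F.ancChain m u c hmc h' with h2 | h2
      · exact ⟨m, h2, hmb⟩
      · exact ⟨u, F.refl u, F.trans _ _ _ h2 hmb⟩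
    · exact ⟨m, F.trans _ _ _ hmc h', hmb⟩

lemma TDForest.exists_root [Finite W] (F : TDForest H) (hconn : H.Connected) :
    ∃ r, ∀ v, F.anc r v := by
  letI : Preorder W := { le := F.anc, le_refl := F.refl, le_trans := F.trans }
  haveI : Nonempty W := hconn.nonempty
  obtain ⟨x0⟩ := ‹Nonempty W›
  have hfin := Set.toFinite {u | F.anc u x0}
  obtain ⟨m, hm, hmin0⟩ := Finset.exists_minimal (s := hfin.toFinset) ⟨x0, by simp [F.refl]⟩
  have hmin : ∀ u ∈ hfin.toFinset, ¬ u < m := fun u hu hlt =>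
    (lt_iff_le_not_ge.mp hlt).2 (hmin0 hu (lt_iff_le_not_ge.mp hlt).1)
  have hm' : F.anc m x0 := by simpa using hm
  have hall : ∀ u, F.anc u x0 → F.anc m u := by
    intro u hu
    rcases F.ancChain u m x0 hu hm' with h | h
    · by_cases hmu : F.anc m u
      · exact hmu
      · exact absurd (lt_iff_le_not_ge.mpr ⟨h, hmu⟩) (hmin u (by simpa using hu))
    · exact h
  refine ⟨m, fun v => ?_⟩
  obtain ⟨w⟩ := hconn.preconnected x0 v
  obtain ⟨mv, h1, h2⟩ := F.exists_common_anc w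
  exact F.trans _ _ _ (hall mv h1) h2

end Forest2

section DelIns

variable [Fintype V] {G : SimpleGraph V} {A D : Set V}

lemma td_del_root (hconn : (G.induce A).Connected) :
    ∃ r ∈ A, treedepth (G.induce (A \ {r})) + 1 ≤ treedepth (G.induce A) := by
  classical
  obtain ⟨F, hF⟩ := exists_forest_depth_le (G.induce A)
  obtain ⟨r', hr'⟩ := F.exists_root hconn
  refine ⟨↑r', r'.2, ?_⟩
  have hd1 : 1 ≤ F.depth := by
    refine le_trans ?_ (F.ncard_anc_le r')
    rw [Nat.one_le_iff_ne_zero, Ne, Set.ncard_eq_zero (Set.toFinite _)]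
    exact fun h => (Set.eq_empty_iff_forall_notMem.mp h r' (F.refl r'))
  let F2 : TDForest (G.induce (A \ {(r' : V)})) :=
    ⟨fun u v => F.anc ⟨↑u, u.2.1⟩ ⟨↑v, v.2.1⟩, fun v => F.refl _,
      fun u v h h' => Subtype.ext (Subtype.mk_eq_mk.mp (F.antisymm _ _ h h')),
      fun u v w h h' => F.trans _ _ _ h h',
      fun u w v h h' => F.ancChain _ _ _ h h',
      fun u v h => F.adjComparable _ _ h⟩
  have h2 : treedepth (G.induce (A \ {(r' : V)})) ≤ F.depth - 1 := by
    refine le_trans (treedepth_le_depth F2) (F2.depth_le fun v => ?_)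
    have hsub : Set.ncard {u | F2.anc u v} ≤
        Set.ncard ({u | F.anc u ⟨↑v, v.2.1⟩} \ {r'}) := by
      refine Set.ncard_le_ncard_of_injOn (fun (u : ↥(A \ {(r' : V)})) => (⟨↑u, u.2.1⟩ : ↥A))
        ?_ ?_ (Set.toFinite _)
      · intro a ha
        refine ⟨ha, fun hcontra => ?_⟩
        exact a.2.2 (Set.mem_singleton_iff.mpr
          (congrArg Subtype.val (Set.mem_singleton_iff.mp hcontra)))
      · intro a _ b _ h
        exact Subtype.ext (Subtype.mk_eq_mk.mp h)
    rw [Set.ncard_diff_singleton_of_mem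
      (show r' ∈ {u | F.anc u ⟨↑v, v.2.1⟩} from hr' _)] at hsub
    exact le_trans hsub (Nat.sub_le_sub_right (F.ncard_anc_le _) 1)
  omega

lemma td_insert_le (G : SimpleGraph V) (D : Set V) (s : V) :
    treedepth (G.induce D) ≤ 1 + treedepth (G.induce (D \ {s})) := by
  classical
  obtain ⟨F', hF'⟩ := exists_forest_depth_le (G.induce (D \ {s}))
  let ancR : ↥D → ↥D → Prop := fun x y =>
    ((x : V) = s) ∨ ∃ (hx : (x : V) ∈ D \ {s}) (hy : (y : V) ∈ D \ {s}),
        F'.anc ⟨↑x, hx⟩ ⟨↑y, hy⟩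
  have hrefl : ∀ v, ancR v v := by
    intro v
    by_cases hv : (v : V) = s
    · exact Or.inl hv
    · exact Or.inr ⟨⟨v.2, hv⟩, ⟨v.2, hv⟩, F'.refl _⟩
  have hanti : ∀ u v, ancR u v → ancR v u → u = v := by
    rintro u v (hu | ⟨hu1, hv1, h1⟩) (hv | ⟨hv2, hu2, h2⟩)
    · exact Subtype.ext (hu.trans hv.symm)
    · exact absurd hu hu2.2
    · exact absurd hv hv1.2
    · exact Subtype.ext (Subtype.mk_eq_mk.mp (F'.antisymm _ _ h1 h2))
  have htrans : ∀ u v w, ancR u v → ancR v w → ancR u w := by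
    rintro u v w (hu | ⟨hu1, hv1, h1⟩) (hv | ⟨hv2, hw2, h2⟩)
    · exact Or.inl hu
    · exact Or.inl hu
    · exact absurd hv hv1.2
    · exact Or.inr ⟨hu1, hw2, F'.trans _ _ _ h1 h2⟩
  have hchain : ∀ u w v, ancR u v → ancR w v → ancR u w ∨ ancR w u := by
    rintro u w v (hu | ⟨hu1, hv1, h1⟩) (hw | ⟨hw2, hv2, h2⟩)
    · exact Or.inl (Or.inl hu)
    · exact Or.inl (Or.inl hu)
    · exact Or.inr (Or.inl hw)
    · rcases F'.ancChain _ _ _ h1 h2 with h | h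
      · exact Or.inl (Or.inr ⟨hu1, hw2, h⟩)
      · exact Or.inr (Or.inr ⟨hw2, hu1, h⟩)
  have hadjc : ∀ u v, (G.induce D).Adj u v → ancR u v ∨ ancR v u := by
    intro u v hadj
    by_cases hu : (u : V) = s
    · exact Or.inl (Or.inl hu)
    by_cases hv : (v : V) = s
    · exact Or.inr (Or.inl hv)
    rcases F'.adjComparable ⟨↑u, ⟨u.2, hu⟩⟩ ⟨↑v, ⟨v.2, hv⟩⟩ hadj with h | h
    · exact Or.inl (Or.inr ⟨⟨u.2, hu⟩, ⟨v.2, hv⟩, h⟩)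
    · exact Or.inr (Or.inr ⟨⟨v.2, hv⟩, ⟨u.2, hu⟩, h⟩)
  let F : TDForest (G.induce D) := ⟨ancR, hrefl, hanti, htrans, hchain, hadjc⟩
  refine le_trans (treedepth_le_depth F) ?_
  refine le_trans (F.depth_le fun y => ?_) (by omega : 1 + F'.depth ≤ 1 + treedepth (G.induce (D \ {s})))
  by_cases hy : (y : V) ∈ D \ {s}
  · set T : Set V := {s} ∪ (Subtype.val '' {p : ↥(D \ {s}) | F'.anc p ⟨↑y, hy⟩}) with hT
    have hmap : Set.ncard {x | F.anc x y} ≤ T.ncard := by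
      refine Set.ncard_le_ncard_of_injOn Subtype.val ?_ (Subtype.val_injective.injOn)
        (Set.toFinite _)
      rintro a (ha | ⟨ha1, ha2, ha3⟩)
      · exact Or.inl ha
      · exact Or.inr ⟨⟨↑a, ha1⟩, ha3, rfl⟩
    refine le_trans hmap (le_trans (Set.ncard_union_le _ _) ?_)
    rw [Set.ncard_singleton, Set.ncard_image_of_injective _ Subtype.val_injective]
    exact Nat.add_le_add_left (F'.ncard_anc_le _) 1
  · have hsub : {x | F.anc x y} ⊆ {x : ↥D | (x : V) = s} := by
      rintro x (hx | ⟨hx1, hy1, _⟩)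
      · exact hx
      · exact absurd hy1 hy
    refine le_trans (Set.ncard_le_ncard hsub (Set.toFinite _)) ?_
    have : Set.ncard {x : ↥D | (x : V) = s} ≤ Set.ncard ({s} : Set V) :=
      Set.ncard_le_ncard_of_injOn Subtype.val (fun a ha => ha) (Subtype.val_injective.injOn)
        (Set.toFinite _)
    rw [Set.ncard_singleton] at this
    omega

end DelIns

section UB

variable {G : SimpleGraph V} {A B C S : Set V} {a v : V}

lemma IsCompOf.unique {C' : Set V} (hC : IsCompOf G B C) (hC' : IsCompOf G B C')
    (ha : a ∈ C) (ha' : a ∈ C') : C = C' :=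
  (hC.eq_Cset ha).trans (hC'.eq_Cset ha').symm

/-- A chosen optimal forest on `G[C]`. -/
noncomputable def Fopt (G : SimpleGraph V) (C : Set V) : TDForest (G.induce C) :=
  (exists_forest_depth_le (G.induce C)).choose

lemma Fopt_depth (G : SimpleGraph V) (C : Set V) :
    (Fopt G C).depth ≤ treedepth (G.induce C) :=
  (exists_forest_depth_le (G.induce C)).choose_spec

/-- The set of treedepths of components of `G[A \ S]`. -/
def Mset (G : SimpleGraph V) (A S : Set V) : Set ℕ :=
  {m | ∃ C, IsCompOf G (A \ S) C ∧ m = treedepth (G.induce C)}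

lemma Mset_bddAbove [Fintype V] : BddAbove (Mset G A S) := by
  refine ⟨Nat.card V, ?_⟩
  rintro m ⟨C, hC, rfl⟩
  exact le_trans (treedepth_le_card _)
    (Nat.card_le_card_of_injective Subtype.val Subtype.val_injective)

lemma mem_compOf_not_mem_left (hC : IsCompOf G (A \ S) C) (hx : a ∈ C) : a ∉ S :=
  (hC.1 hx).2

lemma treedepth_le_value [Fintype V] (G : SimpleGraph V) (A S : Set V) :
    treedepth (G.induce A) ≤ S.ncard + sSup (Mset G A S) := by
  classical
  set k := sSup (Mset G A S) with hk
  let ancR : ↥A → ↥A → Prop := fun x y =>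
    ((x : V) ∈ S ∧ (y : V) ∈ S ∧ (WellOrderingRel (x : V) (y : V) ∨ (x : V) = (y : V))) ∨
    ((x : V) ∈ S ∧ (y : V) ∉ S) ∨
    ∃ C, IsCompOf G (A \ S) C ∧ ∃ (hx : (x : V) ∈ C) (hy : (y : V) ∈ C),
      (Fopt G C).anc ⟨↑x, hx⟩ ⟨↑y, hy⟩
  have hrefl : ∀ v, ancR v v := by
    intro v
    by_cases hv : (v : V) ∈ S
    · exact Or.inl ⟨hv, hv, Or.inr rfl⟩
    · exact Or.inr (Or.inr ⟨Cset G (A \ S) ↑v, Cset_isCompOf ⟨v.2, hv⟩,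
        mem_Cset_self ⟨v.2, hv⟩, mem_Cset_self ⟨v.2, hv⟩, (Fopt G _).refl _⟩)
  have hanti : ∀ u v, ancR u v → ancR v u → u = v := by
    rintro u v (⟨hu, hv, h1⟩ | ⟨hu, hv⟩ | ⟨C, hC, hu, hv, h1⟩)
      (⟨hv', hu', h2⟩ | ⟨hv', hu'⟩ | ⟨C', hC', hv', hu', h2⟩)
    · rcases h1 with h1 | h1
      · rcases h2 with h2 | h2
        · exact absurd (_root_.trans h1 h2) (irrefl_of WellOrderingRel (u : V))
        · exact Subtype.ext h2.symm
      · exact Subtype.ext h1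
    · exact absurd hu hu'
    · exact absurd hu (mem_compOf_not_mem_left hC' hu')
    · exact absurd hv' hv
    · exact absurd hu hu'
    · exact absurd hu (mem_compOf_not_mem_left hC' hu')
    · exact absurd hv' (mem_compOf_not_mem_left hC hv)
    · exact absurd hv' (mem_compOf_not_mem_left hC hv)
    · have hCC : C = C' := hC.unique hC' hu hu'
      subst hCC
      exact Subtype.ext (Subtype.mk_eq_mk.mp ((Fopt G C).antisymm _ _ h1 h2))
  have htrans : ∀ u v w, ancR u v → ancR v w → ancR u w := by
    rintro u v w (⟨hu, hv, h1⟩ | ⟨hu, hv⟩ | ⟨C, hC, hu, hv, h1⟩)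
      (⟨hv', hw', h2⟩ | ⟨hv', hw'⟩ | ⟨C', hC', hv', hw', h2⟩)
    · rcases h1 with h1 | h1
      · rcases h2 with h2 | h2
        · exact Or.inl ⟨hu, hw', Or.inl (_root_.trans h1 h2)⟩
        · exact Or.inl ⟨hu, hw', Or.inl (h2 ▸ h1)⟩
      · exact Or.inl ⟨hu, hw', h1 ▸ h2⟩
    · exact Or.inr (Or.inl ⟨hu, hw'⟩)
    · exact absurd hv (mem_compOf_not_mem_left hC' hv')
    · exact absurd hv' hv
    · exact absurd hv' hv
    · exact Or.inr (Or.inl ⟨hu, mem_compOf_not_mem_left hC' hw'⟩)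
    · exact absurd hv' (mem_compOf_not_mem_left hC hv)
    · exact absurd hv' (mem_compOf_not_mem_left hC hv)
    · have hCC : C = C' := hC.unique hC' hv hv'
      subst hCC
      exact Or.inr (Or.inr ⟨C, hC, hu, hw', (Fopt G C).trans _ _ _ h1 h2⟩)
  have hchain : ∀ u w v, ancR u v → ancR w v → ancR u w ∨ ancR w u := by
    intro u w v h1 h2
    by_cases hu : (u : V) ∈ S
    · by_cases hw : (w : V) ∈ S
      · rcases trichotomous_of WellOrderingRel (u : V) (w : V) with h | h | h
        · exact Or.inl (Or.inl ⟨hu, hw, Or.inl h⟩)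
        · exact Or.inl (Or.inl ⟨hu, hw, Or.inr h⟩)
        · exact Or.inr (Or.inl ⟨hw, hu, Or.inl h⟩)
      · exact Or.inl (Or.inr (Or.inl ⟨hu, hw⟩))
    · by_cases hw : (w : V) ∈ S
      · exact Or.inr (Or.inr (Or.inl ⟨hw, hu⟩))
      · rcases h1 with ⟨hu', _⟩ | ⟨hu', _⟩ | ⟨C, hC, hu1, hv1, h1'⟩
        · exact absurd hu' hu
        · exact absurd hu' hu
        rcases h2 with ⟨hw', _⟩ | ⟨hw', _⟩ | ⟨C', hC', hw1, hv1', h2'⟩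
        · exact absurd hw' hw
        · exact absurd hw' hw
        have hCC : C = C' := hC.unique hC' hv1 hv1'
        subst hCC
        rcases (Fopt G C).ancChain _ _ _ h1' h2' with h | h
        · exact Or.inl (Or.inr (Or.inr ⟨C, hC, hu1, hw1, h⟩))
        · exact Or.inr (Or.inr (Or.inr ⟨C, hC, hw1, hu1, h⟩))
  have hadjc : ∀ u v, (G.induce A).Adj u v → ancR u v ∨ ancR v u := by
    intro u v hadj
    have hadj' : G.Adj ↑u ↑v := hadj
    by_cases hu : (u : V) ∈ S
    · by_cases hv : (v : V) ∈ S
      · rcases trichotomous_of WellOrderingRel (u : V) (v : V) with h | h | h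
        · exact Or.inl (Or.inl ⟨hu, hv, Or.inl h⟩)
        · exact absurd h hadj'.ne
        · exact Or.inr (Or.inl ⟨hv, hu, Or.inl h⟩)
      · exact Or.inl (Or.inr (Or.inl ⟨hu, hv⟩))
    · by_cases hv : (v : V) ∈ S
      · exact Or.inr (Or.inr (Or.inl ⟨hv, hu⟩))
      · have huA : (u : V) ∈ A \ S := ⟨u.2, hu⟩
        have hvA : (v : V) ∈ A \ S := ⟨v.2, hv⟩
        have hvC : (v : V) ∈ Cset G (A \ S) ↑u := ReachIn.of_adj huA hvA hadj'
        rcases (Fopt G (Cset G (A \ S) ↑u)).adjComparable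
            ⟨↑u, mem_Cset_self huA⟩ ⟨↑v, hvC⟩ hadj' with h | h
        · exact Or.inl (Or.inr (Or.inr ⟨_, Cset_isCompOf huA, mem_Cset_self huA, hvC, h⟩))
        · exact Or.inr (Or.inr (Or.inr ⟨_, Cset_isCompOf huA, hvC, mem_Cset_self huA, h⟩))
  let F : TDForest (G.induce A) := ⟨ancR, hrefl, hanti, htrans, hchain, hadjc⟩
  refine le_trans (treedepth_le_depth F) (F.depth_le fun y => ?_)
  by_cases hy : (y : V) ∈ S
  · have hsub : Set.ncard {x | F.anc x y} ≤ S.ncard := by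
      refine Set.ncard_le_ncard_of_injOn Subtype.val ?_ (Subtype.val_injective.injOn)
        (Set.toFinite _)
      rintro x (⟨hx, _⟩ | ⟨hx, _⟩ | ⟨C, hC, hx, hy', _⟩)
      · exact hx
      · exact hx
      · exact absurd hy (mem_compOf_not_mem_left hC hy')
    omega
  · have hyA : (y : V) ∈ A \ S := ⟨y.2, hy⟩
    set C0 := Cset G (A \ S) ↑y with hC0def
    have hC0 : IsCompOf G (A \ S) C0 := Cset_isCompOf hyA
    have hy0 : (y : V) ∈ C0 := mem_Cset_self hyA
    have hsub : Set.ncard {x | F.anc x y} ≤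
        (S ∪ (Subtype.val '' {p : ↥C0 | (Fopt G C0).anc p ⟨↑y, hy0⟩})).ncard := by
      refine Set.ncard_le_ncard_of_injOn Subtype.val ?_ (Subtype.val_injective.injOn)
        (Set.toFinite _)
      rintro x (⟨hx, _⟩ | ⟨hx, _⟩ | ⟨C, hC, hx, hy', hanc⟩)
      · exact Or.inl hx
      · exact Or.inl hx
      · have hCC : C = C0 := hC.unique hC0 hy' hy0
        subst hCC
        exact Or.inr ⟨⟨↑x, hx⟩, hanc, rfl⟩
    refine le_trans hsub (le_trans (Set.ncard_union_le _ _) ?_)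
    rw [Set.ncard_image_of_injective _ Subtype.val_injective]
    have h1 : Set.ncard {p : ↥C0 | (Fopt G C0).anc p ⟨↑y, hy0⟩} ≤ k := by
      refine le_trans ((Fopt G C0).ncard_anc_le _) (le_trans (Fopt_depth G C0) ?_)
      exact le_csSup Mset_bddAbove ⟨C0, hC0, rfl⟩
    omega

end UB

section Shrink

variable {G : SimpleGraph V} {A B B' C D S S' : Set V} {a b s v : V}

lemma Cset_sub_comp (hD : IsCompOf G B' D) (hB : B ⊆ B') (hv : v ∈ B ∩ D) :
    Cset G (B ∩ D) v = Cset G B v := by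
  apply Set.Subset.antisymm
  · exact fun x hx => (hx : ReachIn G (B ∩ D) v x).mono Set.inter_subset_left
  · intro x hx
    obtain ⟨w, hw⟩ := (hx : ReachIn G B v x).exists_walk
    refine reachIn_of_walk w fun z hz => ⟨hw z hz, ?_⟩
    exact hD.reachIn_closed hv.2 ((reachIn_mem_of_walk w hw z hz).mono hB)

lemma IsCompOf.mono_of_subset (hD : IsCompOf G B' D) (hB : B ⊆ B') (hDB : D ⊆ B) :
    IsCompOf G B D :=
  ⟨hDB, hD.2.1, hD.2.2.1, fun u hu v hv => hD.2.2.2 u hu v ⟨hB hv.1, hv.2⟩⟩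

lemma sSup_Mset_drop [Fintype V] (G : SimpleGraph V) (A S : Set V) (s : V) (hs : s ∈ S) :
    sSup (Mset G A (S \ {s})) ≤ 1 + sSup (Mset G A S) := by
  refine csSup_le' ?_
  rintro m ⟨D, hD, rfl⟩
  have hDs : D \ {s} = (A \ S) ∩ D := by
    ext x
    constructor
    · rintro ⟨hxD, hxs⟩
      have := hD.1 hxD
      exact ⟨⟨this.1, fun hxS => this.2 ⟨hxS, hxs⟩⟩, hxD⟩
    · rintro ⟨⟨hxA, hxS⟩, hxD⟩
      exact ⟨hxD, fun hxs => hxS (Set.mem_singleton_iff.mp hxs ▸ hs)⟩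
  refine le_trans (td_insert_le G D s) ?_
  have h2 : treedepth (G.induce (D \ {s})) ≤ sSup (Mset G A S) := by
    refine le_trans (treedepth_le_value G (D \ {s}) ∅) ?_
    rw [Set.ncard_empty, zero_add]
    refine csSup_le' ?_
    rintro m ⟨C, hC, rfl⟩
    rw [Set.diff_empty] at hC
    obtain ⟨u, hu⟩ := hC.2.1
    have huB : u ∈ (A \ S) ∩ D := by rw [← hDs]; exact hC.1 hu
    have hCeq : C = Cset G (A \ S) u := by
      rw [hC.eq_Cset hu, hDs]
      exact Cset_sub_comp hD (fun x hx => ⟨hx.1, fun hc => hx.2 hc.1⟩) huB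
    refine le_csSup Mset_bddAbove ⟨C, ?_, rfl⟩
    rw [hCeq]
    exact Cset_isCompOf huB.1
  omega

lemma value_mono [Fintype V] (G : SimpleGraph V) (A : Set V) :
    ∀ (n : ℕ) (S' S : Set V), (S \ S').ncard ≤ n → S' ⊆ S →
      S'.ncard + sSup (Mset G A S') ≤ S.ncard + sSup (Mset G A S) := by
  intro n
  induction n with
  | zero =>
    intro S' S hcard hsub
    have : S \ S' = ∅ := by
      rw [← Set.ncard_eq_zero (Set.toFinite _)]; omega
    have hSS : S = S' := Set.Subset.antisymm (fun x hx => by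
      by_contra hx'
      exact Set.eq_empty_iff_forall_notMem.mp this x ⟨hx, hx'⟩) hsub
    rw [hSS]
  | succ n ih =>
    intro S' S hcard hsub
    by_cases hemp : S \ S' = ∅
    · have hSS : S = S' := Set.Subset.antisymm (fun x hx => by
        by_contra hx'
        exact Set.eq_empty_iff_forall_notMem.mp hemp x ⟨hx, hx'⟩) hsub
      rw [hSS]
    · obtain ⟨s, hs⟩ := Set.nonempty_iff_ne_empty.mpr hemp
      have hstep1 : S' ⊆ S \ {s} := fun x hx =>
        ⟨hsub hx, fun hc => hs.2 (Set.mem_singleton_iff.mp hc ▸ hx)⟩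
      have hd : (S \ {s}) \ S' = (S \ S') \ {s} := by
        ext x; constructor
        · rintro ⟨⟨h1, h2⟩, h3⟩; exact ⟨⟨h1, h3⟩, h2⟩
        · rintro ⟨⟨h1, h2⟩, h3⟩; exact ⟨⟨h1, h3⟩, h2⟩
      have hcard2 : ((S \ {s}) \ S').ncard ≤ n := by
        rw [hd, Set.ncard_diff_singleton_of_mem hs]
        have h1 : 1 ≤ (S \ S').ncard := by
          rw [Nat.one_le_iff_ne_zero, Ne, Set.ncard_eq_zero (Set.toFinite _)]
          exact Set.nonempty_iff_ne_empty.mp ⟨s, hs⟩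
        omega
      refine le_trans (ih S' (S \ {s}) hcard2 hstep1) ?_
      have hn1 : (S \ {s}).ncard = S.ncard - 1 :=
        Set.ncard_diff_singleton_of_mem hs.1
      have hn2 : 1 ≤ S.ncard := by
        rw [Nat.one_le_iff_ne_zero, Ne, Set.ncard_eq_zero (Set.toFinite _)]
        exact Set.nonempty_iff_ne_empty.mp ⟨s, hs.1⟩
      have h3 := sSup_Mset_drop G A S s hs.1
      omega

lemma exists_minSepIn [Fintype V] {G : SimpleGraph V} {A : Set V} {a b : V} :
    ∀ (n : ℕ) (S : Set V), S.ncard ≤ n → IsSepIn G A S a b →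
      ∃ S', S' ⊆ S ∧ IsMinSepIn G A S' a b := by
  intro n
  induction n with
  | zero =>
    intro S hcard hsep
    have hS : S = ∅ := by rw [← Set.ncard_eq_zero (Set.toFinite _)]; omega
    subst hS
    exact ⟨∅, subset_rfl, hsep, fun S'' hsub => absurd (Set.empty_subset S'') hsub.2⟩
  | succ n ih =>
    intro S hcard hsep
    by_cases hmin : ∀ S'' ⊂ S, ¬ IsSepIn G A S'' a b
    · exact ⟨S, subset_rfl, hsep, hmin⟩
    · push_neg at hmin
      obtain ⟨S'', hsub, hsep''⟩ := hmin
      have hlt : S''.ncard < S.ncard := Set.ncard_lt_ncard hsub (Set.toFinite _)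
      obtain ⟨S', h1, h2⟩ := ih S'' (by omega) hsep''
      exact ⟨S', h1.trans hsub.subset, h2⟩

lemma clique_card_le_td {W : Type*} [Finite W] (H : SimpleGraph W)
    (hcl : ∀ a b : W, a ≠ b → H.Adj a b) : Nat.card W ≤ treedepth H := by
  classical
  obtain ⟨F, hF⟩ := exists_forest_depth_le H
  rcases isEmpty_or_nonempty W with hW | hW
  · simp [Nat.card_eq_zero.mpr (Or.inl hW)]
  · letI : Fintype W := Fintype.ofFinite W
    letI : Preorder W := { le := F.anc, le_refl := F.refl, le_trans := F.trans }
    obtain ⟨m, _, hmax0⟩ := Finset.exists_maximal (s := (Finset.univ : Finset W)) Finset.univ_nonempty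
    have hmax : ∀ x ∈ (Finset.univ : Finset W), ¬ m < x := fun x hx hlt =>
      (lt_iff_le_not_ge.mp hlt).2 (hmax0 hx (lt_iff_le_not_ge.mp hlt).1)
    have hall : ∀ x, F.anc x m := by
      intro x
      by_cases hxm : x = m
      · exact hxm ▸ F.refl m
      rcases F.adjComparable x m (hcl x m hxm) with h | h
      · exact h
      · by_cases hx : F.anc x m
        · exact hx
        · exact absurd (lt_iff_le_not_ge.mpr ⟨h, hx⟩) (hmax x (Finset.mem_univ x))
    have : {u | F.anc u m} = Set.univ := Set.eq_univ_of_forall hall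
    refine le_trans ?_ (le_trans (F.ncard_anc_le m) hF)
    rw [this, Set.ncard_univ]

end Shrink

section LB

variable {G : SimpleGraph V}

lemma td_induce_mono [Fintype V] (G : SimpleGraph V) {C A : Set V} (h : C ⊆ A) :
    treedepth (G.induce C) ≤ treedepth (G.induce A) := by
  refine treedepth_le_of_map (fun c => ⟨↑c, h c.2⟩) ?_ ?_
  · intro x y hxy
    exact Subtype.ext (Subtype.mk_eq_mk.mp hxy)
  · intro x y hadj
    exact hadj

lemma LB [Fintype V] (G : SimpleGraph V) :
    ∀ (n : ℕ) (A : Set V), A.ncard ≤ n →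
      (∃ a ∈ A, ∃ b ∈ A, a ≠ b ∧ ¬ G.Adj a b) →
      ∃ S x y, IsMinSepIn G A S x y ∧
        S.ncard + sSup (Mset G A S) ≤ treedepth (G.induce A) := by
  classical
  intro n
  induction n with
  | zero =>
    rintro A hA ⟨a, ha, -⟩
    have : A = ∅ := by rw [← Set.ncard_eq_zero (Set.toFinite _)]; omega
    exact absurd ha (this ▸ Set.notMem_empty a)
  | succ n ih =>
    rintro A hcard ⟨a, ha, b, hb, hab, hnadj⟩
    by_cases hconn : ∀ x ∈ A, ∀ y ∈ A, ReachIn G A x y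
    case neg =>
      push_neg at hconn
      obtain ⟨x, hx, y, hy, hnr⟩ := hconn
      have hxy : x ≠ y := fun h => hnr (h ▸ ReachIn.refl hx)
      have hAd : A \ (∅ : Set V) = A := Set.diff_empty
      refine ⟨∅, x, y, ⟨⟨Set.empty_subset A, ⟨hx, Set.notMem_empty x⟩,
        ⟨hy, Set.notMem_empty y⟩, by rw [hAd]; exact hnr⟩,
        fun S'' hsub => absurd (Set.empty_subset S'') hsub.2⟩, ?_⟩
      rw [Set.ncard_empty, zero_add]
      refine csSup_le' ?_
      rintro m ⟨C, hC, rfl⟩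
      rw [hAd] at hC
      exact td_induce_mono G hC.1
    case pos =>
      have hAconn : (G.induce A).Connected := by
        rw [SimpleGraph.connected_iff]
        refine ⟨?_, ⟨⟨a, ha⟩⟩⟩
        rintro ⟨x, hx⟩ ⟨y, hy⟩
        obtain ⟨hx', hy', hr⟩ := hconn x hx y hy
        exact hr
      obtain ⟨r, hrA, hrtd⟩ := td_del_root hAconn
      by_cases hcl : ∀ x ∈ A \ {r}, ∀ y ∈ A \ {r}, x ≠ y → G.Adj x y
      · -- A \ {r} is a clique
        obtain ⟨c, hcA, hcr, hnadj_rc⟩ : ∃ c ∈ A, c ≠ r ∧ ¬ G.Adj r c := by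
          by_cases har : a = r
          · refine ⟨b, hb, fun h => hab (har.trans h.symm), fun h => hnadj ?_⟩
            rw [har]; exact h
          · by_cases hbr : b = r
            · refine ⟨a, ha, har, fun h => hnadj ?_⟩
              rw [hbr]; exact h.symm
            · exact absurd (hcl a ⟨ha, har⟩ b ⟨hb, hbr⟩ hab) hnadj
        set S : Set V := {v | v ∈ A ∧ G.Adj r v} with hSdef
        have hrS : r ∉ S := fun h => G.irrefl h.2
        have hcS : c ∉ S := fun h => hnadj_rc h.2
        have hsep : IsSepIn G A S r c := by
          refine ⟨fun v hv => hv.1, ⟨hrA, hrS⟩, ⟨hcA, hcS⟩, ?_⟩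
          intro hreach
          obtain ⟨w, hw⟩ := hreach.exists_walk
          cases w with
          | nil => exact hcr rfl
          | @cons _ u _ hadj w' =>
            have hu : u ∈ A \ S := hw u (by simp)
            exact hu.2 ⟨hu.1, hadj⟩
        -- value bound
        have hq1 : c ∈ (A \ S) \ {r} := ⟨⟨hcA, hcS⟩, fun h => hcr (Set.mem_singleton_iff.mp h)⟩
        have hsup : sSup (Mset G A S) ≤ ((A \ S) \ {r}).ncard := by
          refine csSup_le' ?_
          rintro m ⟨C, hC, rfl⟩
          by_cases hrC : r ∈ C
          · -- C = {r}
            have hCr : C = {r} := by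
              rw [hC.eq_Cset hrC]
              apply Set.Subset.antisymm
              · intro u hu
                obtain ⟨w, hw⟩ := (hu : ReachIn G (A \ S) r u).exists_walk
                cases w with
                | nil => exact rfl
                | @cons _ z _ hadj w' =>
                  have hz : z ∈ A \ S := hw z (by simp)
                  exact absurd (⟨hz.1, hadj⟩ : z ∈ S) hz.2
              · rintro u rfl
                exact mem_Cset_self (hC.1 hrC)
            have h1 : treedepth (G.induce C) ≤ 1 := by
              refine le_trans (treedepth_le_card _) ?_
              rw [Nat.card_coe_set_eq, hCr, Set.ncard_singleton]
            refine le_trans h1 ?_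
            rw [Nat.one_le_iff_ne_zero, Ne, Set.ncard_eq_zero (Set.toFinite _)]
            exact fun h => (Set.eq_empty_iff_forall_notMem.mp h c hq1)
          · have hCsub : C ⊆ (A \ S) \ {r} := fun u hu =>
              ⟨hC.1 hu, fun h => hrC ((Set.mem_singleton_iff.mp h) ▸ hu)⟩
            refine le_trans (treedepth_le_card _) ?_
            rw [Nat.card_coe_set_eq]
            exact Set.ncard_le_ncard hCsub (Set.toFinite _)
        have hSsub : S ⊆ A \ {r} := fun v hv => ⟨hv.1, fun h => hrS ((Set.mem_singleton_iff.mp h) ▸ hv)⟩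
        have hdisj : Disjoint S ((A \ S) \ {r}) := by
          rw [Set.disjoint_left]
          rintro v hv ⟨⟨_, hvS⟩, _⟩
          exact hvS hv
        have hunion : S ∪ ((A \ S) \ {r}) ⊆ A \ {r} := by
          rintro v (hv | hv)
          · exact hSsub hv
          · exact ⟨hv.1.1, hv.2⟩
        have hcards : S.ncard + ((A \ S) \ {r}).ncard ≤ (A \ {r}).ncard := by
          rw [← Set.ncard_union_eq hdisj (Set.toFinite _) (Set.toFinite _)]
          exact Set.ncard_le_ncard hunion (Set.toFinite _)
        have hclique : (A \ {r}).ncard ≤ treedepth (G.induce (A \ {r})) := by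
          have := clique_card_le_td (G.induce (A \ {r})) ?_
          · rwa [Nat.card_coe_set_eq] at this
          · intro u v huv
            exact hcl ↑u u.2 ↑v v.2 (fun h => huv (Subtype.ext h))
        have hfinal : S.ncard + sSup (Mset G A S) ≤ treedepth (G.induce A) := by
          have h5 : treedepth (G.induce (A \ {r})) ≤ treedepth (G.induce A) :=
            td_induce_mono G Set.diff_subset
          omega
        obtain ⟨S', hS'sub, hS'min⟩ := exists_minSepIn S.ncard S le_rfl hsep
        refine ⟨S', r, c, hS'min, ?_⟩
        refine le_trans (value_mono G A (S \ S').ncard S' S le_rfl hS'sub) hfinal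
      · -- A \ {r} has a nonadjacent pair
        push_neg at hcl
        obtain ⟨x, hx, y, hy, hxy, hnadj'⟩ := hcl
        have hA1 : 1 ≤ A.ncard := by
          rw [Nat.one_le_iff_ne_zero, Ne, Set.ncard_eq_zero (Set.toFinite _)]
          exact fun h => (Set.eq_empty_iff_forall_notMem.mp h a ha)
        have hcard' : (A \ {r}).ncard ≤ n := by
          rw [Set.ncard_diff_singleton_of_mem hrA]
          omega
        obtain ⟨S', x', y', hmin', hval'⟩ := ih (A \ {r}) hcard' ⟨x, hx, y, hy, hxy, hnadj'⟩
        have hS'A : S' ⊆ A \ {r} := hmin'.1.1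
        have hrS' : r ∉ S' := fun h => (hS'A h).2 rfl
        have hset : A \ (S' ∪ {r}) = (A \ {r}) \ S' := by
          ext v
          constructor
          · rintro ⟨hvA, hv⟩
            exact ⟨⟨hvA, fun h => hv (Or.inr h)⟩, fun h => hv (Or.inl h)⟩
          · rintro ⟨⟨hvA, hvr⟩, hvS⟩
            exact ⟨hvA, fun h => h.elim hvS hvr⟩
        have hsepT : IsSepIn G A (S' ∪ {r}) x' y' := by
          refine ⟨?_, ?_, ?_, ?_⟩
          · rintro v (hv | hv)
            · exact (hS'A hv).1
            · exact (Set.mem_singleton_iff.mp hv) ▸ hrA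
          · rw [hset]; exact hmin'.1.2.1
          · rw [hset]; exact hmin'.1.2.2.1
          · rw [hset]; exact hmin'.1.2.2.2
        have hMeq : Mset G A (S' ∪ {r}) = Mset G (A \ {r}) S' := by
          unfold Mset; rw [hset]
        have hncT : (S' ∪ {r}).ncard = S'.ncard + 1 := by
          rw [Set.union_singleton, Set.ncard_insert_of_notMem hrS' (Set.toFinite _)]
        have hvalT : (S' ∪ {r}).ncard + sSup (Mset G A (S' ∪ {r})) ≤ treedepth (G.induce A) := by
          rw [hMeq, hncT]
          omega
        obtain ⟨S'', hS''sub, hS''min⟩ := exists_minSepIn (S' ∪ {r}).ncard (S' ∪ {r}) le_rfl hsepT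
        refine ⟨S'', x', y', hS''min, ?_⟩
        exact le_trans (value_mono G A ((S' ∪ {r}) \ S'').ncard S'' (S' ∪ {r}) le_rfl hS''sub) hvalT

end LB

theorem stmt2 {V : Type*} [Fintype V] (G : SimpleGraph V)
    (hnc : ¬ ∀ u v : V, u ≠ v → G.Adj u v) :
    treedepth G =
      sInf {n : ℕ | ∃ S : Set V, IsMinSep G S ∧
        n = S.ncard +
          sSup {m : ℕ | ∃ C : Set V, IsCompOf G (Sᶜ : Set V) C ∧
            m = treedepth (G.induce C)}} := by
  classical
  push_neg at hnc
  obtain ⟨u, v, huv, hnadj⟩ := hnc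
  have hM : ∀ S : Set V, Mset G Set.univ S =
      {m : ℕ | ∃ C : Set V, IsCompOf G (Sᶜ : Set V) C ∧ m = treedepth (G.induce C)} := by
    intro S; unfold Mset; rw [← Set.compl_eq_univ_diff]
  have hut : treedepth (G.induce (Set.univ : Set V)) = treedepth G := by
    apply le_antisymm
    · exact treedepth_le_of_map Subtype.val Subtype.val_injective (fun a b h => h)
    · exact treedepth_le_of_map (fun w => (⟨w, Set.mem_univ w⟩ : ↥(Set.univ : Set V)))
        (fun a b h => Subtype.mk_eq_mk.mp h) (fun a b h => h)
  obtain ⟨S, x, y, hmin, hval⟩ := LB G (Set.univ : Set V).ncard Set.univ le_rfl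
    ⟨u, Set.mem_univ u, v, Set.mem_univ v, huv, hnadj⟩
  have hmem : S.ncard + sSup (Mset G Set.univ S) ∈ {n : ℕ | ∃ S : Set V, IsMinSep G S ∧
      n = S.ncard +
        sSup {m : ℕ | ∃ C : Set V, IsCompOf G (Sᶜ : Set V) C ∧
          m = treedepth (G.induce C)}} :=
    ⟨S, ⟨x, y, hmin⟩, by rw [hM]⟩
  apply le_antisymm
  · refine le_csInf ⟨_, hmem⟩ ?_
    rintro n ⟨S₀, hS₀, rfl⟩
    rw [← hut, ← hM S₀]
    exact treedepth_le_value G Set.univ S₀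
  · refine le_trans (Nat.sInf_le hmem) ?_
    rw [hut] at hval
    exact hval

end PACE
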